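/- (Menshikov–Volkov criterion, easy direction) Suppose the BMC (X,P,μ) is not strongly recurrent. Fix o ∈ X and define g(x) := P_x(no particle ever visits o) for x ≠ o and g(o) := 0. Then 0 < g(y) ≤ 1 for some y, and g satisfies Ψ(x, Pg(x)) ≥ g(x) for all x ≠ o, where Ψ(x,z) := ∑_{k≥1} z^k μ_k(x) is the offspring generating function and Pg(x) := ∑_y p(x,y) g(y). -/

import Mathlib

open Filter MeasureTheory ProbabilityTheory
open scoped Classical ENNReal

/-- `n`-step transition probabilities of a kernel `q` on a countable state space. -/
noncomputable def kpow {X : Type*} (q : X → X → ℝ) : ℕ → X → X → ℝ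
  | 0, x, y => if x = y then 1 else 0
  | n + 1, x, y => ∑' z : X, q x z * kpow q n z y

/-- The spectral radius `ρ(P) = limsup_n (p^{(n)}(x,x))^{1/n}` (computed at base point `x`). -/
noncomputable def specRad {X : Type*} (q : X → X → ℝ) (x : X) : ℝ :=
  Filter.atTop.limsup fun n : ℕ => (kpow q n x x) ^ ((n : ℝ)⁻¹)

/-- The measure on a countable discrete space with mass `f y` at the point `y`. -/
noncomputable def rowMeasure {Y : Type*} [MeasurableSpace Y] (f : Y → ℝ) : Measure Y :=
  Measure.sum fun y => (ENNReal.ofReal (f y)) • Measure.dirac y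

/-- Canonical probabilistic model of a branching Markov chain `(X,P,μ)` with Ulam–Harris
labelling of particles: `cnt u x` is the number of offspring of particle `u` when `u` is
located at `x` (with law `μ(x)`), and `step (i :: u) x` is the position of the `i`-th child
of a particle `u` located at `x` (with law `p(x,·)`); all this randomness is independent. -/
structure BMC (X : Type*) [MeasurableSpace X] (p : X → X → ℝ) (μ : X → ℕ → ℝ)
    (Ω : Type*) [MeasurableSpace Ω] (Pm : Measure Ω) where
  step : List ℕ → X → Ω → X
  cnt : List ℕ → X → Ω → ℕ
  meas_step : ∀ u x, Measurable (step u x)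
  meas_cnt : ∀ u x, Measurable (cnt u x)
  indep : iIndepFun
      (fun (ux : List ℕ × X) ω => (step ux.1 ux.2 ω, cnt ux.1 ux.2 ω)) Pm
  law : ∀ u x, Measure.map (fun ω => (step u x ω, cnt u x ω)) Pm
      = Measure.prod (rowMeasure (p x)) (rowMeasure (μ x))

namespace BMC

variable {X : Type*} [MeasurableSpace X] {p : X → X → ℝ} {μ : X → ℕ → ℝ}
  {Ω : Type*} [MeasurableSpace Ω] {Pm : Measure Ω}

/-- Position of the particle with label `u` in the BMC started with one particle at `x0`
(the particle `u` lives at time `u.length`). -/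
def pos (M : BMC X p μ Ω Pm) (x0 : X) : List ℕ → Ω → X
  | [], _ => x0
  | i :: u, ω => M.step (i :: u) (M.pos x0 u ω) ω

/-- Whether the particle with label `u` is ever born in the BMC started at `x0`. -/
def alive (M : BMC X p μ Ω Pm) (x0 : X) : List ℕ → Ω → Prop
  | [], _ => True
  | i :: u, ω => M.alive x0 u ω ∧ i < M.cnt u (M.pos x0 u ω) ω

/-- The event that, starting with one particle at `x0`, the state `y` is visited by
particles infinitely many times. -/
def visitsInf (M : BMC X p μ Ω Pm) (x0 y : X) : Set Ω :=
  {ω | {u : List ℕ | M.alive x0 u ω ∧ M.pos x0 u ω = y}.Infinite}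

/-- `α(x)`: the probability that `x` is visited infinitely often, starting with one
particle at `x`. -/
noncomputable def alpha (M : BMC X p μ Ω Pm) (x : X) : ℝ :=
  (Pm (M.visitsInf x x)).toReal

/-- The first time `n ≥ 1` at which some particle of the BMC started at `x0` is located
at `y` (`T_y`), as a set-indexed family of events `{T_y > n}` would be derived from it. -/
noncomputable def hittingTimeExp (M : BMC X p μ Ω Pm) (x0 y : X) : ℝ≥0∞ :=
  ∑' n : ℕ, Pm {ω | ∀ u : List ℕ, M.alive x0 u ω → 1 ≤ u.length → u.length ≤ n →
    M.pos x0 u ω ≠ y}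

end BMC

/-- Mean offspring number `m(x)` of the offspring law `μ(x)`. -/
noncomputable def meanOff {X : Type*} (μ : X → ℕ → ℝ) (x : X) : ℝ :=
  ∑' k : ℕ, (k : ℝ) * μ x k

/-! ### Auxiliary machinery for the proof -/

set_option linter.unusedSectionVars false
set_option maxHeartbeats 1000000

section RowM
variable {Y : Type*} [MeasurableSpace Y] [MeasurableSingletonClass Y] [Countable Y]

lemma rowMeasure_singleton (f : Y → ℝ) (y : Y) :
    rowMeasure f {y} = ENNReal.ofReal (f y) := by
  rw [rowMeasure, Measure.sum_apply _ (measurableSet_singleton y)]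
  rw [tsum_eq_single y]
  · simp
  · intro z hz
    simp [Measure.smul_apply, Measure.dirac_apply' _ (measurableSet_singleton y),
      Set.indicator_of_notMem (show z ∉ ({y} : Set Y) from hz)]

lemma rowMeasure_univ (f : Y → ℝ) :
    rowMeasure f Set.univ = ∑' y, ENNReal.ofReal (f y) := by
  rw [rowMeasure, Measure.sum_apply _ MeasurableSet.univ]
  simp

lemma isProbabilityMeasure_rowMeasure {f : Y → ℝ} (h0 : ∀ y, 0 ≤ f y) (h1 : HasSum f 1) :
    IsProbabilityMeasure (rowMeasure f) := by
  constructor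
  rw [rowMeasure_univ, ← ENNReal.ofReal_tsum_of_nonneg h0 h1.summable, h1.tsum_eq]
  simp
end RowM

namespace BMC

variable {X : Type*} [Countable X] [MeasurableSpace X] [MeasurableSingletonClass X]
  {p : X → X → ℝ} {μ : X → ℕ → ℝ}
  {Ω : Type*} [MeasurableSpace Ω] {Pm : Measure Ω} [IsProbabilityMeasure Pm]

/-- The basic random pair attached to index `(u,x)`. -/
def Fp (M : BMC X p μ Ω Pm) (j : List ℕ × X) : Ω → X × ℕ :=
  fun ω => (M.step j.1 j.2 ω, M.cnt j.1 j.2 ω)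

variable (M : BMC X p μ Ω Pm)

lemma meas_Fp (j : List ℕ × X) : Measurable (M.Fp j) :=
  (M.meas_step j.1 j.2).prodMk (M.meas_cnt j.1 j.2)

lemma map_Fp (j : List ℕ × X) :
    Measure.map (M.Fp j) Pm = (rowMeasure (p j.2)).prod (rowMeasure (μ j.2)) :=
  M.law j.1 j.2

lemma Pm_Fp_preimage (j : List ℕ × X) {s : Set (X × ℕ)} (hs : MeasurableSet s) :
    Pm (M.Fp j ⁻¹' s) = ((rowMeasure (p j.2)).prod (rowMeasure (μ j.2))) s := by
  rw [← map_Fp M j, Measure.map_apply (meas_Fp M j) hs]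

variable (hp0 : ∀ x y, 0 ≤ p x y) (hp1 : ∀ x, HasSum (p x) 1)
  (hμ0 : ∀ x k, 0 ≤ μ x k) (hμsum : ∀ x, HasSum (μ x) 1)

include hp0 hp1 hμ0 hμsum

lemma Pm_step_eq (u : List ℕ) (x y : X) :
    Pm {ω | M.step u x ω = y} = ENNReal.ofReal (p x y) := by
  haveI := isProbabilityMeasure_rowMeasure (hμ0 x) (hμsum x)
  haveI := isProbabilityMeasure_rowMeasure (hp0 x) (hp1 x)
  have : {ω | M.step u x ω = y} = M.Fp (u, x) ⁻¹' ({y} ×ˢ Set.univ) := by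
    ext ω; simp [Fp, eq_comm]
  rw [this, Pm_Fp_preimage M _ ((measurableSet_singleton y).prod MeasurableSet.univ),
    Measure.prod_prod, rowMeasure_singleton]
  simp

lemma Pm_cnt_eq (u : List ℕ) (x : X) (k : ℕ) :
    Pm {ω | M.cnt u x ω = k} = ENNReal.ofReal (μ x k) := by
  haveI := isProbabilityMeasure_rowMeasure (hμ0 x) (hμsum x)
  haveI := isProbabilityMeasure_rowMeasure (hp0 x) (hp1 x)
  have : {ω | M.cnt u x ω = k} = M.Fp (u, x) ⁻¹' (Set.univ ×ˢ {k}) := by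
    ext ω; simp [Fp, eq_comm]
  rw [this, Pm_Fp_preimage M _ (MeasurableSet.univ.prod (measurableSet_singleton k)),
    Measure.prod_prod, rowMeasure_singleton]
  simp

end BMC

namespace BMC

variable {X : Type*} [Countable X] [MeasurableSpace X] [MeasurableSingletonClass X]
  {p : X → X → ℝ} {μ : X → ℕ → ℝ}
  {Ω : Type*} [MeasurableSpace Ω] {Pm : Measure Ω} [IsProbabilityMeasure Pm]

/-- Component padding maps. -/
def rpad (x0 : X) : Bool → X × ℕ → X × ℕ := fun b q => if b then (x0, q.2) else (q.1, 0)

lemma meas_rpad (x0 : X) (b : Bool) : Measurable (rpad x0 b) := by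
  cases b
  · exact measurable_fst.prodMk measurable_const
  · exact (measurable_const (a := x0)).prodMk measurable_snd

/-- The component family: `(j, false)` carries the step variable, `(j, true)` the count. -/
def Hf (M : BMC X p μ Ω Pm) (x0 : X) (j : (List ℕ × X) × Bool) : Ω → X × ℕ :=
  fun ω => rpad x0 j.2 (M.Fp j.1 ω)

variable (M : BMC X p μ Ω Pm)

lemma meas_Hf (x0 : X) (j : (List ℕ × X) × Bool) : Measurable (M.Hf x0 j) :=
  (meas_rpad x0 j.2).comp (meas_Fp M j.1)

variable (hp0 : ∀ x y, 0 ≤ p x y) (hp1 : ∀ x, HasSum (p x) 1)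
  (hμ0 : ∀ x k, 0 ≤ μ x k) (hμsum : ∀ x, HasSum (μ x) 1)

include hp0 hp1 hμ0 hμsum

lemma pair_split (x0 : X) (j : List ℕ × X) {A B : Set (X × ℕ)}
    (hA : MeasurableSet A) (hB : MeasurableSet B) :
    Pm (M.Fp j ⁻¹' (rpad x0 false ⁻¹' A ∩ rpad x0 true ⁻¹' B))
      = Pm (M.Fp j ⁻¹' (rpad x0 false ⁻¹' A)) * Pm (M.Fp j ⁻¹' (rpad x0 true ⁻¹' B)) := by
  haveI := isProbabilityMeasure_rowMeasure (hμ0 j.2) (hμsum j.2)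
  haveI := isProbabilityMeasure_rowMeasure (hp0 j.2) (hp1 j.2)
  have hA' : rpad x0 false ⁻¹' A = ((fun a => (a, (0:ℕ))) ⁻¹' A) ×ˢ Set.univ := by
    ext q; simp [rpad]
  have hB' : rpad x0 true ⁻¹' B = Set.univ ×ˢ ((fun n => (x0, n)) ⁻¹' B) := by
    ext q; simp [rpad]
  have mA : MeasurableSet ((fun a => (a, (0:ℕ))) ⁻¹' A) :=
    (measurable_id.prodMk measurable_const) hA
  have mB : MeasurableSet ((fun n => (x0, n)) ⁻¹' B) :=
    (measurable_const.prodMk measurable_id) hB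
  rw [hA', hB', Set.prod_inter_prod, Set.inter_univ, Set.univ_inter,
    Pm_Fp_preimage M _ (mA.prod mB), Pm_Fp_preimage M _ (mA.prod MeasurableSet.univ),
    Pm_Fp_preimage M _ (MeasurableSet.univ.prod mB),
    Measure.prod_prod, Measure.prod_prod, Measure.prod_prod]
  simp [mul_mul_mul_comm]

lemma iIndepFun_Hf (x0 : X) :
    iIndepFun (M.Hf x0) Pm := by
  rw [iIndepFun_iff_measure_inter_preimage_eq_mul]
  intro S' sets hsets
  classical
  set S : Finset (List ℕ × X) := S'.image Prod.fst with hS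
  set sets' : (List ℕ × X) × Bool → Set (X × ℕ) :=
    (fun j => if j ∈ S' then sets j else Set.univ) with hsets'def
  have hsets' : ∀ j, MeasurableSet (sets' j) := by
    intro j
    by_cases h : j ∈ S'
    · simpa [sets', h] using hsets j h
    · simp [sets', h]
  set D : (List ℕ × X) → Set (X × ℕ) :=
    (fun ux => rpad x0 false ⁻¹' sets' (ux, false) ∩ rpad x0 true ⁻¹' sets' (ux, true)) with hDdef
  have hD : ∀ ux, MeasurableSet (D ux) := fun ux =>
    ((meas_rpad x0 false) (hsets' _)).inter ((meas_rpad x0 true) (hsets' _))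
  have h1 : (⋂ j ∈ S', M.Hf x0 j ⁻¹' sets j) = ⋂ ux ∈ S, M.Fp ux ⁻¹' D ux := by
    ext ω
    simp only [Set.mem_iInter, Set.mem_preimage, hDdef, Set.mem_inter_iff]
    constructor
    · intro h ux hux
      constructor
      · by_cases hf : (ux, false) ∈ S'
        · simpa [sets', hf, Hf] using h _ hf
        · simp [sets', hf]
      · by_cases ht : (ux, true) ∈ S'
        · simpa [sets', ht, Hf] using h _ ht
        · simp [sets', ht]
    · intro h j hj
      obtain ⟨ju, jb⟩ := j
      have := h ju (Finset.mem_image_of_mem Prod.fst hj)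
      cases jb
      · simpa [Hf, sets', hj] using this.1
      · simpa [Hf, sets', hj] using this.2
  have h2 : Pm (⋂ ux ∈ S, M.Fp ux ⁻¹' D ux) = ∏ ux ∈ S, Pm (M.Fp ux ⁻¹' D ux) :=
    M.indep.measure_inter_preimage_eq_mul S (fun ux _ => hD ux)
  rw [h1, h2]
  have h3 : ∀ ux ∈ S, Pm (M.Fp ux ⁻¹' D ux)
      = Pm (M.Hf x0 (ux, false) ⁻¹' sets' (ux, false))
        * Pm (M.Hf x0 (ux, true) ⁻¹' sets' (ux, true)) := fun ux _ =>
    pair_split M hp0 hp1 hμ0 hμsum x0 ux (hsets' (ux, false)) (hsets' (ux, true))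
  rw [Finset.prod_congr rfl h3]
  have h4 : ∀ j ∈ S', Pm (M.Hf x0 j ⁻¹' sets j) = Pm (M.Hf x0 j ⁻¹' sets' j) := by
    intro j hj; simp [sets', hj]
  rw [Finset.prod_congr rfl h4]
  have h5 : ∏ j ∈ S', Pm (M.Hf x0 j ⁻¹' sets' j)
      = ∏ j ∈ S ×ˢ (Finset.univ : Finset Bool), Pm (M.Hf x0 j ⁻¹' sets' j) := by
    apply Finset.prod_subset
    · intro j hj
      exact Finset.mem_product.2 ⟨Finset.mem_image_of_mem _ hj, Finset.mem_univ _⟩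
    · intro j _ hj
      simp [sets', hj]
  rw [h5, Finset.prod_product]
  refine Finset.prod_congr rfl fun ux _ => ?_
  rw [Fintype.prod_bool, mul_comm]

end BMC

section Bind
variable {Ω' : Type*} {X' : Type*} [Countable X'] [MeasurableSpace X']
  [MeasurableSingletonClass X']

lemma measurable_bind' {m' : MeasurableSpace Ω'} {h : Ω' → X'} (hh : Measurable[m'] h)
    {α : Type*} [MeasurableSpace α] {F : X' → Ω' → α} (hF : ∀ x, Measurable[m'] (F x)) :
    Measurable[m'] (fun ω => F (h ω) ω) := by
  intro A hA
  have : (fun ω => F (h ω) ω) ⁻¹' A = ⋃ x : X', (h ⁻¹' {x}) ∩ (F x ⁻¹' A) := by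
    ext ω
    simp only [Set.mem_preimage, Set.mem_iUnion, Set.mem_inter_iff, Set.mem_singleton_iff]
    constructor
    · intro hω; exact ⟨h ω, rfl, hω⟩
    · rintro ⟨x, rfl, hω⟩; exact hω
  rw [this]
  exact MeasurableSet.iUnion fun x => (hh (measurableSet_singleton x)).inter (hF x hA)

lemma measurableSet_bind' {m' : MeasurableSpace Ω'} {h : Ω' → X'} (hh : Measurable[m'] h)
    {A : X' → Set Ω'} (hA : ∀ x, MeasurableSet[m'] (A x)) :
    MeasurableSet[m'] {ω | ω ∈ A (h ω)} := by
  have : {ω | ω ∈ A (h ω)} = ⋃ x : X', (h ⁻¹' {x}) ∩ A x := by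
    ext ω
    simp only [Set.mem_setOf_eq, Set.mem_iUnion, Set.mem_inter_iff, Set.mem_preimage,
      Set.mem_singleton_iff]
    constructor
    · intro hω; exact ⟨h ω, rfl, hω⟩
    · rintro ⟨x, rfl, hω⟩; exact hω
  rw [this]
  exact MeasurableSet.iUnion fun x => (hh (measurableSet_singleton x)).inter (hA x)

end Bind

namespace BMC

variable {X : Type*} [Countable X] [MeasurableSpace X] [MeasurableSingletonClass X]
  {p : X → X → ℝ} {μ : X → ℕ → ℝ}
  {Ω : Type*} [MeasurableSpace Ω] {Pm : Measure Ω} [IsProbabilityMeasure Pm]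

/-- The σ-algebra generated by a set of component indices. -/
def blockS (M : BMC X p μ Ω Pm) (x0 : X) (T : Set ((List ℕ × X) × Bool)) :
    MeasurableSpace Ω :=
  ⨆ j ∈ T, MeasurableSpace.comap (M.Hf x0 j) inferInstance

variable (M : BMC X p μ Ω Pm)

lemma blockS_le (x0 : X) (T : Set ((List ℕ × X) × Bool)) :
    M.blockS x0 T ≤ ‹MeasurableSpace Ω› :=
  iSup₂_le fun j _ => (meas_Hf M x0 j).comap_le

lemma blockS_mono (x0 : X) {T₁ T₂ : Set ((List ℕ × X) × Bool)} (h : T₁ ⊆ T₂) :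
    M.blockS x0 T₁ ≤ M.blockS x0 T₂ :=
  iSup₂_le fun j hj => le_iSup₂ (f := fun j (_ : j ∈ T₂) =>
    MeasurableSpace.comap (M.Hf x0 j) inferInstance) j (h hj)

lemma measurable_Hf_block (x0 : X) {T : Set ((List ℕ × X) × Bool)}
    {j : (List ℕ × X) × Bool} (hj : j ∈ T) :
    Measurable[M.blockS x0 T] (M.Hf x0 j) := by
  intro s hs
  exact le_iSup₂ (f := fun j (_ : j ∈ T) =>
    MeasurableSpace.comap (M.Hf x0 j) inferInstance) j hj _ ⟨s, hs, rfl⟩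

lemma measurable_step_block (x0 : X) {T : Set ((List ℕ × X) × Bool)} {u : List ℕ} {x : X}
    (h : ((u, x), false) ∈ T) :
    Measurable[M.blockS x0 T] (M.step u x) := by
  have : M.step u x = Prod.fst ∘ (M.Hf x0 ((u, x), false)) := by
    funext ω; simp [Hf, rpad, Fp]
  rw [this]
  exact measurable_fst.comp (measurable_Hf_block M x0 h)

lemma measurable_cnt_block (x0 : X) {T : Set ((List ℕ × X) × Bool)} {u : List ℕ} {x : X}
    (h : ((u, x), true) ∈ T) :
    Measurable[M.blockS x0 T] (M.cnt u x) := by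
  have : M.cnt u x = Prod.snd ∘ (M.Hf x0 ((u, x), true)) := by
    funext ω; simp [Hf, rpad, Fp]
  rw [this]
  exact measurable_snd.comp (measurable_Hf_block M x0 h)

variable (hp0 : ∀ x y, 0 ≤ p x y) (hp1 : ∀ x, HasSum (p x) 1)
  (hμ0 : ∀ x k, 0 ≤ μ x k) (hμsum : ∀ x, HasSum (μ x) 1)

include hp0 hp1 hμ0 hμsum

lemma indep_blocks (x0 : X) {T₁ T₂ : Set ((List ℕ × X) × Bool)} (hd : Disjoint T₁ T₂) :
    Indep (M.blockS x0 T₁) (M.blockS x0 T₂) Pm :=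
  indep_iSup_of_disjoint (fun j => (meas_Hf M x0 j).comap_le)
    (iIndepFun_Hf M hp0 hp1 hμ0 hμsum x0) hd

lemma measure_inter_blocks (x0 : X) {T₁ T₂ : Set ((List ℕ × X) × Bool)} (hd : Disjoint T₁ T₂)
    {A B : Set Ω} (hA : MeasurableSet[M.blockS x0 T₁] A) (hB : MeasurableSet[M.blockS x0 T₂] B) :
    Pm (A ∩ B) = Pm A * Pm B :=
  ((indep_blocks M hp0 hp1 hμ0 hμsum x0 hd).indepSet_of_measurableSet hA hB).measure_inter_eq_mul

lemma blocks_inter_prod (x0 : X) {κ : Type*} (s : Finset κ)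
    (T : κ → Set ((List ℕ × X) × Bool))
    (hd : ∀ i ∈ s, ∀ j ∈ s, i ≠ j → Disjoint (T i) (T j))
    {A : κ → Set Ω} (hA : ∀ i ∈ s, MeasurableSet[M.blockS x0 (T i)] (A i)) :
    Pm (⋂ i ∈ s, A i) = ∏ i ∈ s, Pm (A i) := by
  classical
  induction s using Finset.induction_on with
  | empty => simp
  | @insert a s' ha ih =>
    rw [Finset.set_biInter_insert, Finset.prod_insert ha]
    have hdisj : Disjoint (T a) (⋃ i ∈ s', T i) := by
      rw [Set.disjoint_iUnion₂_right]
      intro i hi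
      exact hd a (Finset.mem_insert_self a s') i (Finset.mem_insert_of_mem hi)
        (fun h => ha (h ▸ hi))
    have hmeas2 : MeasurableSet[M.blockS x0 (⋃ i ∈ s', T i)] (⋂ i ∈ s', A i) := by
      refine MeasurableSet.biInter s'.countable_toSet fun i hi => ?_
      exact M.blockS_mono x0 (Set.subset_biUnion_of_mem hi) _
        (hA i (Finset.mem_insert_of_mem hi))
    rw [measure_inter_blocks M hp0 hp1 hμ0 hμsum x0 hdisj
      (hA a (Finset.mem_insert_self a s')) hmeas2]
    rw [ih (fun i hi j hj hij => hd i (Finset.mem_insert_of_mem hi) j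
      (Finset.mem_insert_of_mem hj) hij) (fun i hi => hA i (Finset.mem_insert_of_mem hi))]

end BMC

/-- The path space carrying the full family of step/count variables. -/
abbrev PathSp (X : Type*) := (List ℕ × X) → X × ℕ

section PathSp
variable {X : Type*} [Countable X] [MeasurableSpace X] [MeasurableSingletonClass X]

/-- Abstract position dynamics on path space. -/
def POSf (f : PathSp X) (y : X) : List ℕ → X
  | [] => y
  | (j :: u) => (f ((j :: u), POSf f y u)).1

/-- Abstract aliveness dynamics on path space. -/
def ALIVEf (f : PathSp X) (y : X) : List ℕ → Prop
  | [] => True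
  | (j :: u) => ALIVEf f y u ∧ j < (f (u, POSf f y u)).2

/-- The abstract avoidance event on path space. -/
def AVs (n : ℕ) (w y : X) : Set (PathSp X) :=
  {f | ∀ u : List ℕ, ALIVEf f y u → n ≤ u.length → POSf f y u ≠ w}

lemma measurable_POSf (y : X) (u : List ℕ) : Measurable fun f : PathSp X => POSf f y u := by
  induction u with
  | nil => exact measurable_const
  | cons j u ih =>
    exact measurable_bind' ih fun x => ((measurable_pi_apply _).fst)

lemma measurableSet_ALIVEf (y : X) (u : List ℕ) :
    MeasurableSet {f : PathSp X | ALIVEf f y u} := by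
  induction u with
  | nil => simp [ALIVEf]
  | cons j u ih =>
    have h2 : MeasurableSet {f : PathSp X | j < (f (u, POSf f y u)).2} :=
      measurableSet_bind' (measurable_POSf y u)
        (A := fun x => {f : PathSp X | j < (f (u, x)).2})
        (fun x => ((measurable_pi_apply (u, x)).snd) measurableSet_Ioi)
    have : {f : PathSp X | ALIVEf f y (j :: u)}
        = {f | ALIVEf f y u} ∩ {f : PathSp X | j < (f (u, POSf f y u)).2} := by
      ext f; simp [ALIVEf]
    rw [this]
    exact ih.inter h2

lemma measurableSet_AVs (n : ℕ) (w y : X) : MeasurableSet (AVs n w y : Set (PathSp X)) := by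
  have h : (AVs n w y : Set (PathSp X))
      = ⋂ u : List ℕ, {f | ALIVEf f y u → n ≤ u.length → POSf f y u ≠ w} := by
    ext f; simp [AVs]
  rw [h]
  refine MeasurableSet.iInter fun u => ?_
  by_cases hn : n ≤ u.length
  · have : {f : PathSp X | ALIVEf f y u → n ≤ u.length → POSf f y u ≠ w}
        = ({f | ALIVEf f y u} ∩ (fun f : PathSp X => POSf f y u) ⁻¹' {w})ᶜ := by
      ext f; simp [hn]
    rw [this]
    exact ((measurableSet_ALIVEf y u).inter
      ((measurable_POSf y u) (measurableSet_singleton w))).compl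
  · have : {f : PathSp X | ALIVEf f y u → n ≤ u.length → POSf f y u ≠ w} = Set.univ := by
      ext f; simp [hn]
    rw [this]
    exact MeasurableSet.univ

end PathSp

namespace BMC

variable {X : Type*} [Countable X] [MeasurableSpace X] [MeasurableSingletonClass X]
  {p : X → X → ℝ} {μ : X → ℕ → ℝ}
  {Ω : Type*} [MeasurableSpace Ω] {Pm : Measure Ω} [IsProbabilityMeasure Pm]

/-- Positions in the subtree rooted at the (virtual) label `v`, with root position `y`. -/
def sPos (M : BMC X p μ Ω Pm) (v : List ℕ) (y : X) : List ℕ → Ω → X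
  | [], _ => y
  | (j :: u), ω => M.step ((j :: u) ++ v) (M.sPos v y u ω) ω

/-- Aliveness in the subtree rooted at the (virtual) label `v`, with root position `y`. -/
def sAlive (M : BMC X p μ Ω Pm) (v : List ℕ) (y : X) : List ℕ → Ω → Prop
  | [], _ => True
  | (j :: u), ω => M.sAlive v y u ω ∧ j < M.cnt (u ++ v) (M.sPos v y u ω) ω

/-- The event that the subtree rooted at `v` (with root at `y`) never visits `w` at
(relative) generations `≥ n`. -/
def sAV (M : BMC X p μ Ω Pm) (v : List ℕ) (n : ℕ) (w y : X) : Set Ω :=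
  {ω | ∀ u : List ℕ, M.sAlive v y u ω → n ≤ u.length → M.sPos v y u ω ≠ w}

variable (M : BMC X p μ Ω Pm)

lemma sPos_nil (y : X) (u : List ℕ) (ω : Ω) : M.sPos [] y u ω = M.pos y u ω := by
  induction u with
  | nil => rfl
  | cons j u ih => simp only [sPos, pos, List.append_nil, ih]

lemma sAlive_nil (y : X) (u : List ℕ) (ω : Ω) : M.sAlive [] y u ω ↔ M.alive y u ω := by
  induction u with
  | nil => exact Iff.rfl
  | cons j u ih => simp only [sAlive, alive, List.append_nil, sPos_nil, ih]

lemma sPos_shift (z : X) (v : List ℕ) (ω : Ω) (u : List ℕ) :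
    M.sPos v (M.pos z v ω) u ω = M.pos z (u ++ v) ω := by
  induction u with
  | nil => rfl
  | cons j u ih => simp only [sPos, pos, List.cons_append, List.append_eq, ih]

lemma sAlive_shift (z : X) (v : List ℕ) (ω : Ω) (u : List ℕ) :
    M.alive z (u ++ v) ω ↔ (M.alive z v ω ∧ M.sAlive v (M.pos z v ω) u ω) := by
  induction u with
  | nil => simp [sAlive]
  | cons j u ih =>
    simp only [List.cons_append, List.append_eq, alive, sAlive, ih, sPos_shift, and_assoc]

/-- The full family of variables, relabelled by appending `v`. -/
def tupleMap (M : BMC X p μ Ω Pm) (v : List ℕ) : Ω → PathSp X :=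
  fun ω j => (M.step (j.1 ++ v) j.2 ω, M.cnt (j.1 ++ v) j.2 ω)

lemma meas_tupleMap (v : List ℕ) : Measurable (M.tupleMap v) :=
  measurable_pi_lambda _ fun j =>
    ((M.meas_step (j.1 ++ v) j.2).prodMk (M.meas_cnt (j.1 ++ v) j.2))

lemma sPos_tuple (v : List ℕ) (y : X) (u : List ℕ) (ω : Ω) :
    M.sPos v y u ω = POSf (M.tupleMap v ω) y u := by
  induction u with
  | nil => rfl
  | cons j u ih => simp only [sPos, POSf, tupleMap, ih]

lemma sAlive_tuple (v : List ℕ) (y : X) (u : List ℕ) (ω : Ω) :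
    M.sAlive v y u ω ↔ ALIVEf (M.tupleMap v ω) y u := by
  induction u with
  | nil => exact Iff.rfl
  | cons j u ih => simp only [sAlive, ALIVEf, tupleMap, ih, sPos_tuple]

lemma sAV_eq_preimage (v : List ℕ) (n : ℕ) (w y : X) :
    M.sAV v n w y = M.tupleMap v ⁻¹' (AVs n w y) := by
  ext ω
  simp only [sAV, AVs, Set.mem_setOf_eq, Set.mem_preimage]
  refine forall_congr' fun u => ?_
  rw [sAlive_tuple, sPos_tuple]

end BMC

namespace BMC

variable {X : Type*} [Countable X] [MeasurableSpace X] [MeasurableSingletonClass X]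
  {p : X → X → ℝ} {μ : X → ℕ → ℝ}
  {Ω : Type*} [MeasurableSpace Ω] {Pm : Measure Ω} [IsProbabilityMeasure Pm]

variable (M : BMC X p μ Ω Pm)
variable (hp0 : ∀ x y, 0 ≤ p x y) (hp1 : ∀ x, HasSum (p x) 1)
  (hμ0 : ∀ x k, 0 ≤ μ x k) (hμsum : ∀ x, HasSum (μ x) 1)

include hp0 hp1 hμ0 hμsum

lemma map_restrict (v : List ℕ) (I : Finset (List ℕ × X)) :
    Measure.map (fun ω => I.restrict (M.tupleMap v ω)) Pm
      = Measure.pi (fun j : I => (rowMeasure (p (j : List ℕ × X).2)).prod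
          (rowMeasure (μ (j : List ℕ × X).2))) := by
  classical
  haveI : ∀ j : I, IsProbabilityMeasure ((rowMeasure (p (j : List ℕ × X).2)).prod
      (rowMeasure (μ (j : List ℕ × X).2))) := fun j => by
    haveI := isProbabilityMeasure_rowMeasure (hp0 ((j : List ℕ × X).2)) (hp1 _)
    haveI := isProbabilityMeasure_rowMeasure (hμ0 ((j : List ℕ × X).2)) (hμsum _)
    infer_instance
  refine (Measure.pi_eq fun s hs => ?_).symm
  set σv : (List ℕ × X) → (List ℕ × X) := fun k => (k.1 ++ v, k.2) with hσ
  have hσinj : Function.Injective σv := by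
    intro a b h
    obtain ⟨h1, h2⟩ := Prod.ext_iff.1 h
    exact Prod.ext (List.append_left_injective v h1) h2
  set sext : (List ℕ × X) → Set (X × ℕ) :=
    (fun k => if h : k ∈ I then s ⟨k, h⟩ else Set.univ) with hsext
  have hsextm : ∀ k, MeasurableSet (sext k) := by
    intro k; by_cases h : k ∈ I
    · simpa [sext, h] using hs ⟨k, h⟩
    · simp [sext, h]
  have hmeasres : Measurable fun ω => I.restrict (M.tupleMap v ω) :=
    measurable_pi_lambda _ fun j =>
      ((M.meas_step _ _).prodMk (M.meas_cnt _ _))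
  rw [Measure.map_apply hmeasres (MeasurableSet.univ_pi hs)]
  set invv : (List ℕ × X) → (List ℕ × X) :=
    (fun k => (k.1.take (k.1.length - v.length), k.2)) with hinvv
  have hinv : ∀ k : List ℕ × X, invv (σv k) = k := by
    intro k
    simp only [invv, σv, List.length_append, Nat.add_sub_cancel]
    exact Prod.ext List.take_left rfl
  have hpre : (fun ω => I.restrict (M.tupleMap v ω)) ⁻¹' (Set.univ.pi s)
      = ⋂ k' ∈ I.image σv, M.Fp k' ⁻¹' (sext (invv k')) := by
    ext ω
    simp only [Set.mem_preimage, Set.mem_pi, Set.mem_univ, true_implies, Set.mem_iInter]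
    constructor
    · intro h k' hk'
      obtain ⟨k, hk, rfl⟩ := Finset.mem_image.1 hk'
      have : invv (σv k) = k := hinv k
      rw [this]
      simpa [sext, hk, Fp, σv, tupleMap, Finset.restrict] using h ⟨k, hk⟩
    · intro h j
      have h2 := h (σv j.1) (Finset.mem_image_of_mem σv j.2)
      rw [hinv j.1] at h2
      simpa [sext, j.2, Fp, σv, tupleMap, Finset.restrict] using h2
  rw [hpre]
  have hprod : Pm (⋂ k' ∈ I.image σv, M.Fp k' ⁻¹' (sext (invv k')))
      = ∏ k' ∈ I.image σv, Pm (M.Fp k' ⁻¹' (sext (invv k'))) :=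
    M.indep.measure_inter_preimage_eq_mul (I.image σv) (fun k' _ => hsextm (invv k'))
  rw [hprod, Finset.prod_image (fun a _ b _ h => hσinj h)]
  have hfac : ∀ k ∈ I, Pm (M.Fp (σv k) ⁻¹' (sext (invv (σv k))))
      = ((rowMeasure (p k.2)).prod (rowMeasure (μ k.2))) (sext k) := by
    intro k _
    rw [show invv (σv k) = k from hinv k, Pm_Fp_preimage M _ (hsextm k)]
  rw [Finset.prod_congr rfl hfac]
  rw [← Finset.prod_coe_sort I (fun k => ((rowMeasure (p k.2)).prod (rowMeasure (μ k.2))) (sext k))]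
  refine Finset.prod_congr rfl fun j _ => ?_
  simp [sext, j.2]

lemma map_tupleMap (v : List ℕ) :
    Measure.map (M.tupleMap v) Pm = Measure.map (M.tupleMap []) Pm := by
  haveI h1 : IsProbabilityMeasure (Measure.map (M.tupleMap v) Pm) :=
    Measure.isProbabilityMeasure_map (meas_tupleMap M v).aemeasurable
  haveI h2 : IsProbabilityMeasure (Measure.map (M.tupleMap []) Pm) :=
    Measure.isProbabilityMeasure_map (meas_tupleMap M ([] : List ℕ)).aemeasurable
  refine ext_of_generate_finite (measurableCylinders fun _ : List ℕ × X => X × ℕ)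
    generateFrom_measurableCylinders.symm isPiSystem_measurableCylinders
    (fun t ht => ?_) (by simp)
  obtain ⟨I, S₀, hS₀, rfl⟩ := (mem_measurableCylinders t).1 ht
  rw [Measure.map_apply (meas_tupleMap M v) (hS₀.cylinder),
    Measure.map_apply (meas_tupleMap M ([] : List ℕ)) (hS₀.cylinder)]
  have hv : ∀ v' : List ℕ, (M.tupleMap v') ⁻¹' (cylinder I S₀)
      = (fun ω => I.restrict (M.tupleMap v' ω)) ⁻¹' S₀ := fun _ => rfl
  have hm : ∀ v' : List ℕ, Measurable fun ω => I.restrict (M.tupleMap v' ω) := fun v' =>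
    measurable_pi_lambda _ fun j => ((M.meas_step _ _).prodMk (M.meas_cnt _ _))
  rw [hv v, hv ([] : List ℕ), ← Measure.map_apply (hm v) hS₀,
    ← Measure.map_apply (hm ([] : List ℕ)) hS₀,
    map_restrict M hp0 hp1 hμ0 hμsum v I, map_restrict M hp0 hp1 hμ0 hμsum ([] : List ℕ) I]

lemma Pm_sAV_shift (v : List ℕ) (n : ℕ) (w y : X) :
    Pm (M.sAV v n w y) = Pm (M.sAV [] n w y) := by
  rw [sAV_eq_preimage, sAV_eq_preimage,
    ← Measure.map_apply (meas_tupleMap M v) (measurableSet_AVs n w y),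
    ← Measure.map_apply (meas_tupleMap M ([] : List ℕ)) (measurableSet_AVs n w y),
    map_tupleMap M hp0 hp1 hμ0 hμsum v]

end BMC

namespace BMC

variable {X : Type*} [Countable X] [MeasurableSpace X] [MeasurableSingletonClass X]
  {p : X → X → ℝ} {μ : X → ℕ → ℝ}
  {Ω : Type*} [MeasurableSpace Ω] {Pm : Measure Ω} [IsProbabilityMeasure Pm]

/-- Indices of components attached to proper labels of the subtree at `v`. -/
def Tsub (X : Type*) (v : List ℕ) : Set ((List ℕ × X) × Bool) :=
  {j | ∃ u x, (j = ((u ++ v, x), true)) ∨ (j = ((u ++ v, x), false) ∧ u ≠ [])}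

/-- Indices of components whose label ends with `i`. -/
def Tlast (X : Type*) (i : ℕ) : Set ((List ℕ × X) × Bool) :=
  {j | j.1.1.getLast? = some i}

lemma Tsub_subset_Tlast (i : ℕ) : Tsub X ([i]) ⊆ Tlast X i := by
  rintro j ⟨u, x, h | ⟨h, -⟩⟩ <;> subst h <;>
    simp [Tlast, List.getLast?_concat]

/-- The event that particle `i` of the first generation has a `w`-avoiding subtree. -/
def Dev (M : BMC X p μ Ω Pm) (i : ℕ) (n : ℕ) (w z : X) : Set Ω :=
  {ω | ω ∈ M.sAV ([i]) n w (M.step ([i]) z ω)}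

variable (M : BMC X p μ Ω Pm)

lemma measurableSet_sAV (v : List ℕ) (n : ℕ) (w y : X) : MeasurableSet (M.sAV v n w y) := by
  rw [sAV_eq_preimage]
  exact (meas_tupleMap M v) (measurableSet_AVs n w y)

lemma measurable_sPos_blockL (x0 : X) {T : Set ((List ℕ × X) × Bool)} {v : List ℕ} {y : X} :
    ∀ u : List ℕ,
      (∀ u' : List ℕ, ∀ x, u' ≠ ([] : List ℕ) → u'.length ≤ u.length →
        ((u' ++ v, x), false) ∈ T) →
      Measurable[M.blockS x0 T] (M.sPos v y u)
  | [], _ => measurable_const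
  | (j :: u), hstep => by
    refine measurable_bind' (measurable_sPos_blockL x0 u fun u' x h1 h2 =>
      hstep u' x h1 (h2.trans (Nat.le_succ _))) (fun x => ?_)
    exact measurable_step_block M x0 (hstep (j :: u) x (List.cons_ne_nil j u) le_rfl)

lemma measurableSet_sAlive_blockL (x0 : X) {T : Set ((List ℕ × X) × Bool)}
    {v : List ℕ} {y : X} :
    ∀ u : List ℕ,
      (∀ u' : List ℕ, ∀ x, u' ≠ ([] : List ℕ) → u'.length ≤ u.length →
        ((u' ++ v, x), false) ∈ T) →
      (∀ u' : List ℕ, ∀ x, u'.length < u.length → ((u' ++ v, x), true) ∈ T) →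
      MeasurableSet[M.blockS x0 T] {ω | M.sAlive v y u ω}
  | [], _, _ => by simp [sAlive]
  | (j :: u), hstep, hcnt => by
    have h2 : MeasurableSet[M.blockS x0 T] {ω | j < M.cnt (u ++ v) (M.sPos v y u ω) ω} := by
      refine measurableSet_bind'
        (measurable_sPos_blockL M x0 u fun u' x h1 hl =>
          hstep u' x h1 (hl.trans (Nat.le_succ _)))
        (A := fun x => (M.cnt (u ++ v) x) ⁻¹' (Set.Ioi j)) (fun x => ?_)
      exact (measurable_cnt_block M x0 (hcnt u x (Nat.lt_succ_self _))) measurableSet_Ioi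
    have heq : {ω | M.sAlive v y (j :: u) ω}
        = {ω | M.sAlive v y u ω} ∩ {ω | j < M.cnt (u ++ v) (M.sPos v y u ω) ω} := by
      ext ω; simp [sAlive]
    rw [heq]
    refine (measurableSet_sAlive_blockL x0 u (fun u' x h1 hl => hstep u' x h1
      (hl.trans (Nat.le_succ _))) (fun u' x hl => hcnt u' x (hl.trans (Nat.lt_succ_self _)))).inter h2

lemma measurableSet_sAV_block (x0 : X) {T : Set ((List ℕ × X) × Bool)}
    {v : List ℕ} {n : ℕ} {w y : X}
    (hstep : ∀ u : List ℕ, ∀ x, u ≠ ([] : List ℕ) → ((u ++ v, x), false) ∈ T)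
    (hcnt : ∀ u : List ℕ, ∀ x, ((u ++ v, x), true) ∈ T) :
    MeasurableSet[M.blockS x0 T] (M.sAV v n w y) := by
  have h : M.sAV v n w y
      = ⋂ u : List ℕ, {ω | M.sAlive v y u ω → n ≤ u.length → M.sPos v y u ω ≠ w} := by
    ext ω; simp [sAV]
  rw [h]
  refine MeasurableSet.iInter fun u => ?_
  by_cases hn : n ≤ u.length
  · have heq : {ω | M.sAlive v y u ω → n ≤ u.length → M.sPos v y u ω ≠ w}
        = ({ω | M.sAlive v y u ω} ∩ (M.sPos v y u) ⁻¹' {w})ᶜ := by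
      ext ω; simp [hn]
    rw [heq]
    exact ((measurableSet_sAlive_blockL M x0 u (fun u' x h1 _ => hstep u' x h1)
      (fun u' x _ => hcnt u' x)).inter
      ((measurable_sPos_blockL M x0 u (fun u' x h1 _ => hstep u' x h1))
        (measurableSet_singleton w))).compl
  · have heq : {ω | M.sAlive v y u ω → n ≤ u.length → M.sPos v y u ω ≠ w} = Set.univ := by
      ext ω; simp [hn]
    rw [heq]
    exact MeasurableSet.univ

lemma measurableSet_sAV_Tsub (x0 : X) (v : List ℕ) (n : ℕ) (w y : X) :
    MeasurableSet[M.blockS x0 (Tsub X v)] (M.sAV v n w y) := by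
  refine measurableSet_sAV_block M x0 ?_ ?_
  · intro u x hu
    exact ⟨u, x, Or.inr ⟨rfl, hu⟩⟩
  · intro u x
    exact ⟨u, x, Or.inl rfl⟩

lemma measurableSet_Dev (i n : ℕ) (w z : X) : MeasurableSet (M.Dev i n w z) :=
  measurableSet_bind' (M.meas_step ([i]) z) (fun y => measurableSet_sAV M ([i]) n w y)

lemma measurableSet_Dev_Tlast (x0 : X) (i n : ℕ) (w z : X) :
    MeasurableSet[M.blockS x0 (Tlast X i)] (M.Dev i n w z) := by
  refine measurableSet_bind' ?_ (fun y => ?_)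
  · exact measurable_step_block M x0 (by simp [Tlast])
  · exact M.blockS_mono x0 (Tsub_subset_Tlast i) _ (measurableSet_sAV_Tsub M x0 ([i]) n w y)

lemma sAV_decomp (n : ℕ) (w z : X) :
    M.sAV ([] : List ℕ) (n+1) w z
      = ⋃ k : ℕ, ({ω | M.cnt ([] : List ℕ) z ω = k} ∩ ⋂ i ∈ Finset.range k, M.Dev i n w z) := by
  ext ω
  simp only [Set.mem_iUnion, Set.mem_inter_iff, Set.mem_setOf_eq, Set.mem_iInter,
    Finset.mem_range, sAV, Dev]
  constructor
  · intro h
    refine ⟨M.cnt ([] : List ℕ) z ω, rfl, fun i hi u halive hlen => ?_⟩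
    have halivei : M.alive z ([i]) ω := ⟨trivial, hi⟩
    have halive' : M.alive z (u ++ [i]) ω :=
      (M.sAlive_shift z ([i]) ω u).2 ⟨halivei, by exact halive⟩
    have hlen' : n + 1 ≤ (u ++ [i]).length := by
      simp only [List.length_append, List.length_singleton]
      omega
    have hres := h (u ++ [i]) ((M.sAlive_nil z (u ++ [i]) ω).2 halive') hlen'
    rw [sPos_nil] at hres
    rw [show M.step ([i]) z ω = M.pos z ([i]) ω from rfl]
    rw [M.sPos_shift z ([i]) ω u]
    exact hres
  · rintro ⟨k, hk, hD⟩ u halive hlen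
    rcases List.eq_nil_or_concat u with rfl | ⟨u', i, rfl⟩
    · simp at hlen
    · rw [List.concat_eq_append] at halive hlen ⊢
      rw [sAlive_nil] at halive
      have h2 := (M.sAlive_shift z ([i]) ω u').1 halive
      have hik : i < k := hk ▸ h2.1.2
      have hlen' : n ≤ u'.length := by
        simp only [List.length_append, List.length_singleton] at hlen
        omega
      have hres := hD i hik u' (by exact h2.2) hlen'
      rw [show M.step ([i]) z ω = M.pos z ([i]) ω from rfl, M.sPos_shift z ([i]) ω u'] at hres
      rw [sPos_nil]
      exact hres

variable (hp0 : ∀ x y, 0 ≤ p x y) (hp1 : ∀ x, HasSum (p x) 1)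
  (hμ0 : ∀ x k, 0 ≤ μ x k) (hμsum : ∀ x, HasSum (μ x) 1)

include hp0 hp1 hμ0 hμsum

lemma Pm_Dev (i n : ℕ) (w z : X) :
    Pm (M.Dev i n w z) = ∑' y : X, ENNReal.ofReal (p z y) * Pm (M.sAV ([] : List ℕ) n w y) := by
  have hdec : M.Dev i n w z
      = ⋃ y : X, ((M.step ([i]) z) ⁻¹' {y} ∩ M.sAV ([i]) n w y) := by
    ext ω
    simp only [Dev, Set.mem_iUnion, Set.mem_inter_iff, Set.mem_preimage,
      Set.mem_singleton_iff, Set.mem_setOf_eq]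
    constructor
    · intro h; exact ⟨M.step ([i]) z ω, rfl, h⟩
    · rintro ⟨y, hy, h⟩; rw [hy]; exact h
  rw [hdec, measure_iUnion ?_ ?_]
  · refine tsum_congr fun y => ?_
    have hdisj : Disjoint ({((([i] : List ℕ), z), false)} : Set ((List ℕ × X) × Bool))
        (Tsub X ([i])) := by
      rw [Set.disjoint_left]
      rintro j hj ⟨u, x, h | ⟨h, hu⟩⟩ <;> rw [Set.mem_singleton_iff] at hj <;> subst hj
      · simp at h
      · apply hu
        have h3 : u ++ [i] = ([] : List ℕ) ++ [i] := by
          simpa using congrArg (fun q => q.1.1) h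
        exact List.append_left_injective _ h3
    rw [measure_inter_blocks M hp0 hp1 hμ0 hμsum z hdisj
      ((measurable_step_block M z (Set.mem_singleton _)) (measurableSet_singleton y))
      (measurableSet_sAV_Tsub M z ([i]) n w y)]
    rw [show (M.step ([i]) z) ⁻¹' {y} = {ω | M.step ([i]) z ω = y} from rfl,
      Pm_step_eq M hp0 hp1 hμ0 hμsum ([i]) z y,
      Pm_sAV_shift M hp0 hp1 hμ0 hμsum ([i]) n w y]
  · intro a b hab
    rw [Function.onFun]
    refine Set.disjoint_left.2 ?_
    rintro ω ⟨h1, -⟩ ⟨h2, -⟩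
    exact hab ((Set.mem_singleton_iff.1 h1).symm.trans (Set.mem_singleton_iff.1 h2))
  · intro y
    exact ((M.meas_step ([i]) z) (measurableSet_singleton y)).inter
      (measurableSet_sAV M _ _ _ _)

lemma Pm_sAV_succ (n : ℕ) (w z : X) :
    Pm (M.sAV ([] : List ℕ) (n+1) w z)
      = ∑' k : ℕ, ENNReal.ofReal (μ z k)
          * (∑' y : X, ENNReal.ofReal (p z y) * Pm (M.sAV ([] : List ℕ) n w y)) ^ k := by
  rw [sAV_decomp, measure_iUnion ?_ ?_]
  · refine tsum_congr fun k => ?_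
    have hdisj : Disjoint ({((([] : List ℕ), z), true)} : Set ((List ℕ × X) × Bool))
        (⋃ i ∈ Finset.range k, Tlast X i) := by
      rw [Set.disjoint_left]
      rintro j hj hj2
      rw [Set.mem_singleton_iff] at hj
      subst hj
      simp only [Set.mem_iUnion] at hj2
      obtain ⟨i, -, hi⟩ := hj2
      simp [Tlast] at hi
    have hrest : MeasurableSet[M.blockS z (⋃ i ∈ Finset.range k, Tlast X i)]
        (⋂ i ∈ Finset.range k, M.Dev i n w z) := by
      refine MeasurableSet.biInter (Finset.range k).countable_toSet fun i hi => ?_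
      exact M.blockS_mono z (Set.subset_biUnion_of_mem hi) _
        (measurableSet_Dev_Tlast M z i n w z)
    have hcntmeas : MeasurableSet[M.blockS z
        ({((([] : List ℕ), z), true)} : Set ((List ℕ × X) × Bool))]
        {ω | M.cnt ([] : List ℕ) z ω = k} :=
      (measurable_cnt_block M z (Set.mem_singleton _)) (measurableSet_singleton k)
    rw [measure_inter_blocks M hp0 hp1 hμ0 hμsum z hdisj hcntmeas hrest]
    rw [blocks_inter_prod M hp0 hp1 hμ0 hμsum z (Finset.range k) (fun i => Tlast X i)
      (fun i _ j _ hij => by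
        rw [Set.disjoint_left]
        intro a ha ha2
        simp only [Tlast, Set.mem_setOf_eq] at ha ha2
        exact hij (by rw [ha] at ha2; exact Option.some_injective _ ha2))
      (fun i _ => measurableSet_Dev_Tlast M z i n w z)]
    rw [Pm_cnt_eq M hp0 hp1 hμ0 hμsum ([] : List ℕ) z k]
    congr 1
    rw [Finset.prod_congr rfl (fun i _ => Pm_Dev M hp0 hp1 hμ0 hμsum i n w z),
      Finset.prod_const, Finset.card_range]
  · intro a b hab
    rw [Function.onFun]
    refine Set.disjoint_left.2 ?_
    rintro ω ⟨h1, -⟩ ⟨h2, -⟩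
    exact hab (h1.symm.trans h2)
  · intro k
    exact ((M.meas_cnt ([] : List ℕ) z) (measurableSet_singleton k)).inter
      (MeasurableSet.biInter (Finset.range k).countable_toSet
        fun i _ => measurableSet_Dev M i n w z)

end BMC

/-- Length-lexicographic (by encoding) strict order on labels. -/
def lexLt (a b : List ℕ) : Prop :=
  a.length < b.length ∨ (a.length = b.length ∧ Encodable.encode a < Encodable.encode b)

lemma lexLt_trichot {a b : List ℕ} (h : a ≠ b) : lexLt a b ∨ lexLt b a := by
  rcases lt_trichotomy a.length b.length with h1 | h1 | h1
  · exact Or.inl (Or.inl h1)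
  · have henc : Encodable.encode a ≠ Encodable.encode b := fun he => h (Encodable.encode_injective he)
    rcases lt_or_gt_of_ne henc with h2 | h2
    · exact Or.inl (Or.inr ⟨h1, h2⟩)
    · exact Or.inr (Or.inr ⟨h1.symm, h2⟩)
  · exact Or.inr (Or.inl h1)

namespace BMC

variable {X : Type*} [Countable X] [MeasurableSpace X] [MeasurableSingletonClass X]
  {p : X → X → ℝ} {μ : X → ℕ → ℝ}
  {Ω : Type*} [MeasurableSpace Ω] {Pm : Measure Ω} [IsProbabilityMeasure Pm]

/-- The event that the particle `v` is alive and located at `y`. -/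
def Vis (M : BMC X p μ Ω Pm) (z y : X) (v : List ℕ) : Set Ω :=
  {ω | M.sAlive ([] : List ℕ) z v ω ∧ M.sPos ([] : List ℕ) z v ω = y}

/-- The event that `v` is the first particle (in length-lex order, among those of
generation `≥ r`) located at `y`. -/
def FirstVis (M : BMC X p μ Ω Pm) (z y : X) (r : ℕ) (v : List ℕ) : Set Ω :=
  (M.Vis z y v ∩ {ω | r ≤ v.length})
    ∩ ⋂ v' : List ℕ, {ω | lexLt v' v → r ≤ v'.length → ω ∉ M.Vis z y v'}

/-- The event that no first-generation particle is located at `w`. -/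
def G1 (M : BMC X p μ Ω Pm) (z w : X) : Set Ω :=
  {ω | ∀ i : ℕ, i < M.cnt ([] : List ℕ) z ω → M.step ([i]) z ω ≠ w}

/-- Low components: steps of labels of length `≤ L`, counts of labels of length `< L`. -/
def Tlow (X : Type*) (L : ℕ) : Set ((List ℕ × X) × Bool) :=
  {j | (j.2 = false ∧ j.1.1 ≠ [] ∧ j.1.1.length ≤ L) ∨ (j.2 = true ∧ j.1.1.length < L)}

variable (M : BMC X p μ Ω Pm)

lemma disjoint_Tlow_Tsub (v : List ℕ) : Disjoint (Tlow X v.length) (Tsub X v) := by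
  rw [Set.disjoint_left]
  rintro j hlow ⟨u, x, h | ⟨h, hu⟩⟩
  · subst h
    rcases hlow with ⟨hb, -, -⟩ | ⟨-, hl⟩
    · exact Bool.noConfusion hb
    · simp only [List.length_append] at hl
      omega
  · subst h
    rcases hlow with ⟨-, -, hl⟩ | ⟨hb, -⟩
    · rcases List.exists_cons_of_ne_nil hu with ⟨a, u', rfl⟩
      simp only [List.length_append, List.length_cons] at hl
      omega
    · exact Bool.noConfusion hb

lemma measurableSet_Vis_Tlow (x0 : X) {L : ℕ} (z y : X) {v : List ℕ} (hv : v.length ≤ L) :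
    MeasurableSet[M.blockS x0 (Tlow X L)] (M.Vis z y v) := by
  have hstep : ∀ u' : List ℕ, ∀ x, u' ≠ ([] : List ℕ) → u'.length ≤ v.length →
      ((u' ++ ([] : List ℕ), x), false) ∈ Tlow X L := by
    intro u' x h1 h2
    exact Or.inl ⟨rfl, by simpa using h1, by simpa using h2.trans hv⟩
  have hcnt : ∀ u' : List ℕ, ∀ x, u'.length < v.length →
      ((u' ++ ([] : List ℕ), x), true) ∈ Tlow X L := by
    intro u' x h1
    exact Or.inr ⟨rfl, by simpa using lt_of_lt_of_le h1 hv⟩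
  have h1 : MeasurableSet[M.blockS x0 (Tlow X L)] {ω | M.sAlive ([] : List ℕ) z v ω} :=
    measurableSet_sAlive_blockL M x0 v hstep hcnt
  have h2 : MeasurableSet[M.blockS x0 (Tlow X L)]
      ((M.sPos ([] : List ℕ) z v) ⁻¹' {y}) :=
    (measurable_sPos_blockL M x0 v (fun u' x ha hl => hstep u' x ha hl))
      (measurableSet_singleton y)
  exact h1.inter h2

lemma measurableSet_G1_Tlow (x0 : X) {L : ℕ} (z w : X) (hL : 1 ≤ L) :
    MeasurableSet[M.blockS x0 (Tlow X L)] (M.G1 z w) := by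
  have h : M.G1 z w = ⋂ i : ℕ,
      ({ω | i < M.cnt ([] : List ℕ) z ω} ∩ (M.step ([i]) z) ⁻¹' {w})ᶜ := by
    ext ω
    simp only [G1, Set.mem_setOf_eq, Set.mem_iInter, Set.mem_compl_iff, Set.mem_inter_iff,
      Set.mem_preimage, Set.mem_singleton_iff]
    tauto
  rw [h]
  refine MeasurableSet.iInter fun i => ?_
  refine (MeasurableSet.inter ?_ ?_).compl
  · exact (measurable_cnt_block M x0 (Or.inr ⟨rfl, by simpa using Nat.lt_of_lt_of_le Nat.zero_lt_one hL⟩)) measurableSet_Ioi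
  · exact (measurable_step_block M x0
      (Or.inl ⟨rfl, by simp, by simpa using hL⟩)) (measurableSet_singleton w)

lemma measurableSet_FirstVis_Tlow (x0 : X) {L : ℕ} (z y : X) (r : ℕ) {v : List ℕ}
    (hv : v.length ≤ L) :
    MeasurableSet[M.blockS x0 (Tlow X L)] (M.FirstVis z y r v) := by
  refine MeasurableSet.inter (MeasurableSet.inter ?_ ?_) ?_
  · exact measurableSet_Vis_Tlow M x0 z y hv
  · by_cases hr : r ≤ v.length
    · have : {ω : Ω | r ≤ v.length} = Set.univ := by ext ω; simp [hr]
      rw [this]; exact @MeasurableSet.univ Ω (M.blockS x0 (Tlow X L))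
    · have : {ω : Ω | r ≤ v.length} = ∅ := by ext ω; simp [hr]
      rw [this]; exact @MeasurableSet.empty Ω (M.blockS x0 (Tlow X L))
  · refine MeasurableSet.iInter fun v' => ?_
    by_cases hc : lexLt v' v ∧ r ≤ v'.length
    · have : {ω : Ω | lexLt v' v → r ≤ v'.length → ω ∉ M.Vis z y v'}
          = (M.Vis z y v')ᶜ := by
        ext ω; simp [hc.1, hc.2]
      rw [this]
      have hlen' : v'.length ≤ L := by
        rcases hc.1 with h | h
        · omega
        · omega
      exact (measurableSet_Vis_Tlow M x0 z y hlen').compl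
    · have : {ω : Ω | lexLt v' v → r ≤ v'.length → ω ∉ M.Vis z y v'} = Set.univ := by
        ext ω
        simp only [Set.mem_setOf_eq, Set.mem_univ, iff_true]
        intro h1 h2
        exact absurd ⟨h1, h2⟩ hc
      rw [this]; exact @MeasurableSet.univ Ω (M.blockS x0 (Tlow X L))

lemma exists_firstVis {z y : X} {r : ℕ} {ω : Ω}
    (h : ∃ v : List ℕ, r ≤ v.length ∧ ω ∈ M.Vis z y v) :
    ∃ v : List ℕ, ω ∈ M.FirstVis z y r v := by
  classical
  set Vs : Set (List ℕ) := {v | r ≤ v.length ∧ ω ∈ M.Vis z y v} with hVs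
  have hne : Vs.Nonempty := h
  have hLne : (List.length '' Vs).Nonempty := hne.image _
  set n₀ := sInf (List.length '' Vs) with hn₀
  obtain ⟨v₁, hv₁, hv₁len⟩ := Nat.sInf_mem hLne
  have hEne : (Encodable.encode '' {v ∈ Vs | v.length = n₀}).Nonempty :=
    ⟨Encodable.encode v₁, ⟨v₁, ⟨hv₁, hv₁len⟩, rfl⟩⟩
  obtain ⟨v₀, ⟨hv₀Vs, hv₀len⟩, hv₀enc⟩ := Nat.sInf_mem hEne
  refine ⟨v₀, ⟨⟨hv₀Vs.2, hv₀Vs.1⟩, ?_⟩⟩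
  refine Set.mem_iInter.2 fun v' => ?_
  intro hlex hr' hvis
  have hv'Vs : v' ∈ Vs := ⟨hr', hvis⟩
  rcases hlex with hl | ⟨hl, he⟩
  · have : n₀ ≤ v'.length := Nat.sInf_le ⟨v', hv'Vs, rfl⟩
    omega
  · have : sInf (Encodable.encode '' {v ∈ Vs | v.length = n₀}) ≤ Encodable.encode v' :=
      Nat.sInf_le ⟨v', ⟨hv'Vs, by omega⟩, rfl⟩
    omega

lemma firstVis_disjoint (z y : X) (r : ℕ) :
    Pairwise (Function.onFun Disjoint fun v => M.FirstVis z y r v) := by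
  intro a b hab
  rw [Function.onFun]
  rw [Set.disjoint_left]
  intro ω ha hb
  rcases lexLt_trichot hab with h | h
  · exact (Set.mem_iInter.1 hb.2 a) h ha.1.2 ha.1.1
  · exact (Set.mem_iInter.1 ha.2 b) h hb.1.2 hb.1.1

lemma key_inclusion {z y w : X} {r : ℕ} (hzy : 1 ≤ r ∨ z ≠ y) :
    M.sAV ([] : List ℕ) 0 w z ⊆ M.sAV ([] : List ℕ) r y z
      ∪ ⋃ v : List ℕ, (M.FirstVis z y r v ∩ M.G1 z w ∩ M.sAV v 0 w y) := by
  intro ω hω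
  by_cases hAV : ω ∈ M.sAV ([] : List ℕ) r y z
  · exact Or.inl hAV
  · refine Or.inr ?_
    have hex : ∃ v : List ℕ, r ≤ v.length ∧ ω ∈ M.Vis z y v := by
      simp only [sAV, Set.mem_setOf_eq, not_forall] at hAV
      obtain ⟨v, ha, hl, hp⟩ := hAV
      exact ⟨v, hl, ⟨ha, by simpa using hp⟩⟩
    obtain ⟨v, hv⟩ := exists_firstVis M hex
    refine Set.mem_iUnion.2 ⟨v, ⟨⟨hv, ?_⟩, ?_⟩⟩
    · -- G1
      intro i hi hstep
      refine hω ([i]) ⟨trivial, hi⟩ (Nat.zero_le _) ?_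
      exact hstep
    · -- subtree avoidance
      intro u halive _
      have hvvis := hv.1.1
      have haliveV : M.alive z v ω := (M.sAlive_nil z v ω).1 hvvis.1
      have hposV : M.pos z v ω = y := by
        have := hvvis.2
        rwa [sPos_nil] at this
      have halive' : M.alive z (u ++ v) ω := by
        refine (M.sAlive_shift z v ω u).2 ⟨haliveV, ?_⟩
        rw [hposV]
        exact halive
      have hres := hω (u ++ v) ((M.sAlive_nil z (u ++ v) ω).2 halive') (Nat.zero_le _)
      rw [sPos_nil] at hres
      rw [← M.sPos_shift z v ω u, hposV] at hres
      exact hres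

variable (hp0 : ∀ x y, 0 ≤ p x y) (hp1 : ∀ x, HasSum (p x) 1)
  (hμ0 : ∀ x k, 0 ≤ μ x k) (hμsum : ∀ x, HasSum (μ x) 1)

include hp0 hp1 hμ0 hμsum

lemma key_bound {z y w : X} {r : ℕ} (hzy : 1 ≤ r ∨ z ≠ y) :
    Pm (M.sAV ([] : List ℕ) 0 w z)
      ≤ Pm (M.sAV ([] : List ℕ) r y z)
        + Pm (M.G1 z w) * Pm (M.sAV ([] : List ℕ) 0 w y) := by
  have hmeasFG : ∀ v : List ℕ, MeasurableSet (M.FirstVis z y r v ∩ M.G1 z w) := by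
    intro v
    by_cases hv1 : 1 ≤ v.length
    · exact M.blockS_le z (Tlow X v.length) _
        ((measurableSet_FirstVis_Tlow M z z y r le_rfl).inter
          (measurableSet_G1_Tlow M z z w hv1))
    · have hv0 : v = ([] : List ℕ) := by
        cases v with
        | nil => rfl
        | cons a l => simp at hv1
      subst hv0
      rcases hzy with hr | hne
      · have : M.FirstVis z y r ([] : List ℕ) = ∅ := by
          apply Set.eq_empty_iff_forall_notMem.2
          intro ω hω
          have := hω.1.2
          simp only [Set.mem_setOf_eq, List.length_nil] at this
          omega
        rw [this]; simp
      · have : M.FirstVis z y r ([] : List ℕ) = ∅ := by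
          apply Set.eq_empty_iff_forall_notMem.2
          intro ω hω
          exact hne (hω.1.1.2)
        rw [this]; simp
  calc Pm (M.sAV ([] : List ℕ) 0 w z)
      ≤ Pm (M.sAV ([] : List ℕ) r y z
          ∪ ⋃ v : List ℕ, (M.FirstVis z y r v ∩ M.G1 z w ∩ M.sAV v 0 w y)) :=
        measure_mono (key_inclusion M hzy)
    _ ≤ Pm (M.sAV ([] : List ℕ) r y z)
          + Pm (⋃ v : List ℕ, (M.FirstVis z y r v ∩ M.G1 z w ∩ M.sAV v 0 w y)) :=
        measure_union_le _ _
    _ ≤ Pm (M.sAV ([] : List ℕ) r y z)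
          + Pm (M.G1 z w) * Pm (M.sAV ([] : List ℕ) 0 w y) := by
        gcongr
        calc Pm (⋃ v : List ℕ, (M.FirstVis z y r v ∩ M.G1 z w ∩ M.sAV v 0 w y))
            ≤ ∑' v : List ℕ, Pm (M.FirstVis z y r v ∩ M.G1 z w ∩ M.sAV v 0 w y) :=
              measure_iUnion_le _
          _ ≤ ∑' v : List ℕ, Pm (M.FirstVis z y r v ∩ M.G1 z w)
                * Pm (M.sAV ([] : List ℕ) 0 w y) := by
              refine ENNReal.tsum_le_tsum fun v => ?_
              by_cases hv1 : 1 ≤ v.length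
              · rw [measure_inter_blocks M hp0 hp1 hμ0 hμsum z
                  (disjoint_Tlow_Tsub v)
                  ((measurableSet_FirstVis_Tlow M z z y r le_rfl).inter
                    (measurableSet_G1_Tlow M z z w hv1))
                  (measurableSet_sAV_Tsub M z v 0 w y)]
                rw [Pm_sAV_shift M hp0 hp1 hμ0 hμsum v 0 w y]
              · have hv0 : v = ([] : List ℕ) := by
                  cases v with
                  | nil => rfl
                  | cons a l => simp at hv1
                subst hv0
                have hz : M.FirstVis z y r ([] : List ℕ) = ∅ := by
                  apply Set.eq_empty_iff_forall_notMem.2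
                  intro ω hω
                  rcases hzy with hr | hne
                  · have := hω.1.2
                    simp only [Set.mem_setOf_eq, List.length_nil] at this
                    omega
                  · exact hne (hω.1.1.2)
                rw [hz]
                simp
          _ = (∑' v : List ℕ, Pm (M.FirstVis z y r v ∩ M.G1 z w))
                * Pm (M.sAV ([] : List ℕ) 0 w y) := ENNReal.tsum_mul_right
          _ ≤ Pm (M.G1 z w) * Pm (M.sAV ([] : List ℕ) 0 w y) := by
              gcongr
              rw [← measure_iUnion ?_ hmeasFG]
              · refine measure_mono ?_
                refine Set.iUnion_subset fun v => ?_
                exact Set.inter_subset_right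
              · intro a b hab
                have := firstVis_disjoint M z y r hab
                rw [Function.onFun] at this ⊢
                exact Disjoint.mono Set.inter_subset_left Set.inter_subset_left this

end BMC

lemma kpow_nonneg {X : Type*} {p : X → X → ℝ} (hp0 : ∀ x y, 0 ≤ p x y) :
    ∀ (k : ℕ) (x y : X), 0 ≤ kpow p k x y
  | 0, x, y => by rw [kpow]; split <;> norm_num
  | (k+1), x, y => by
    rw [kpow]
    exact tsum_nonneg fun z => mul_nonneg (hp0 x z) (kpow_nonneg hp0 k z y)

namespace BMC

variable {X : Type*} [Countable X] [MeasurableSpace X] [MeasurableSingletonClass X]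
  {p : X → X → ℝ} {μ : X → ℕ → ℝ}
  {Ω : Type*} [MeasurableSpace Ω] {Pm : Measure Ω} [IsProbabilityMeasure Pm]

variable (M : BMC X p μ Ω Pm)

lemma sAV_zero_self (w : X) : M.sAV ([] : List ℕ) 0 w w = ∅ := by
  apply Set.eq_empty_iff_forall_notMem.2
  intro ω hω
  exact hω ([] : List ℕ) trivial (Nat.zero_le _) rfl

lemma sAV_zero_eq_one {z w : X} (h : z ≠ w) :
    M.sAV ([] : List ℕ) 0 w z = M.sAV ([] : List ℕ) 1 w z := by
  ext ω
  constructor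
  · intro hω u ha hl
    exact hω u ha (Nat.zero_le _)
  · intro hω u ha _
    cases u with
    | nil => exact h
    | cons j u => exact hω (j :: u) ha (by simp)

lemma theoremSet_eq (x o : X) :
    {ω | ∀ u : List ℕ, M.alive x u ω → M.pos x u ω ≠ o} = M.sAV ([] : List ℕ) 0 o x := by
  ext ω
  simp only [Set.mem_setOf_eq, sAV]
  constructor
  · intro h u ha _
    rw [sPos_nil]
    exact h u ((M.sAlive_nil x u ω).1 ha)
  · intro h u ha
    have := h u ((M.sAlive_nil x u ω).2 ha) (Nat.zero_le _)
    rwa [sPos_nil] at this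

variable (hp0 : ∀ x y, 0 ≤ p x y) (hp1 : ∀ x, HasSum (p x) 1)
  (hμ0 : ∀ x k, 0 ≤ μ x k) (hμsum : ∀ x, HasSum (μ x) 1) (hμzero : ∀ x, μ x 0 = 0)

include hp0 hp1 hμ0 hμsum

lemma tsum_ofReal_μ (z : X) : ∑' k : ℕ, ENNReal.ofReal (μ z k) = 1 := by
  rw [← ENNReal.ofReal_tsum_of_nonneg (hμ0 z) (hμsum z).summable, (hμsum z).tsum_eq]
  simp

lemma tsum_ofReal_p (z : X) : ∑' y : X, ENNReal.ofReal (p z y) = 1 := by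
  rw [← ENNReal.ofReal_tsum_of_nonneg (hp0 z) (hp1 z).summable, (hp1 z).tsum_eq]
  simp

include hμzero in
lemma G1_bound (z w : X) :
    Pm (M.G1 z w) ≤ 1 - ENNReal.ofReal (p z w) := by
  classical
  set c : ℝ≥0∞ := 1 - ENNReal.ofReal (p z w) with hc
  have hc1 : c ≤ 1 := tsub_le_self
  have hdec : M.G1 z w = ⋃ k : ℕ, ({ω | M.cnt ([] : List ℕ) z ω = k}
      ∩ ⋂ i ∈ Finset.range k, (M.step ([i]) z) ⁻¹' {w}ᶜ) := by
    ext ω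
    simp only [G1, Set.mem_setOf_eq, Set.mem_iUnion, Set.mem_inter_iff, Set.mem_iInter,
      Finset.mem_range, Set.mem_preimage, Set.mem_compl_iff, Set.mem_singleton_iff]
    constructor
    · intro h
      exact ⟨M.cnt ([] : List ℕ) z ω, rfl, fun i hi => h i hi⟩
    · rintro ⟨k, hk, h⟩ i hi
      exact h i (hk ▸ hi)
  have hstepne : ∀ i : ℕ, Pm ((M.step ([i]) z) ⁻¹' {w}ᶜ) = c := by
    intro i
    rw [Set.preimage_compl, prob_compl_eq_one_sub ((M.meas_step ([i]) z)
      (measurableSet_singleton w))]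
    rw [show (M.step ([i]) z) ⁻¹' {w} = {ω | M.step ([i]) z ω = w} from rfl,
      Pm_step_eq M hp0 hp1 hμ0 hμsum ([i]) z w]
  have hperk : ∀ k : ℕ, Pm ({ω | M.cnt ([] : List ℕ) z ω = k}
      ∩ ⋂ i ∈ Finset.range k, (M.step ([i]) z) ⁻¹' {w}ᶜ)
      = ENNReal.ofReal (μ z k) * c ^ k := by
    intro k
    set T : ℕ → Set ((List ℕ × X) × Bool) :=
      (fun j => if j = k then {((([] : List ℕ), z), true)} else {((([j] : List ℕ), z), false)})
      with hT
    set A : ℕ → Set Ω :=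
      (fun j => if j = k then {ω | M.cnt ([] : List ℕ) z ω = k}
        else (M.step ([j]) z) ⁻¹' {w}ᶜ) with hA
    have hTd : ∀ i ∈ Finset.range (k+1), ∀ j ∈ Finset.range (k+1), i ≠ j →
        Disjoint (T i) (T j) := by
      intro i _ j _ hij
      simp only [T]
      split_ifs with h1 h2 h2
      · exact absurd (h1.trans h2.symm) hij
      · rw [Set.disjoint_left]; rintro a rfl h; simp at h
      · rw [Set.disjoint_left]; rintro a rfl h; simp at h
      · rw [Set.disjoint_left]; rintro a rfl h
        rw [Set.mem_singleton_iff] at h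
        apply hij
        have := congrArg (fun q => q.1.1) h
        simpa using this
    have hAm : ∀ j ∈ Finset.range (k+1), MeasurableSet[M.blockS z (T j)] (A j) := by
      intro j _
      simp only [T, A]
      split_ifs with h1
      · rw [show T j = {((([] : List ℕ), z), true)} by simp [hT, h1]]
        exact (measurable_cnt_block M z (Set.mem_singleton _)) (measurableSet_singleton k)
      · rw [show T j = {((([j] : List ℕ), z), false)} by simp [hT, h1]]
        exact (measurable_step_block M z (Set.mem_singleton _))
          (measurableSet_singleton w).compl
    have hprod := blocks_inter_prod M hp0 hp1 hμ0 hμsum z (Finset.range (k+1)) T hTd hAm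
    have hinter : (⋂ i ∈ Finset.range (k+1), A i)
        = {ω | M.cnt ([] : List ℕ) z ω = k}
          ∩ ⋂ i ∈ Finset.range k, (M.step ([i]) z) ⁻¹' {w}ᶜ := by
      rw [Finset.range_add_one, Finset.set_biInter_insert]
      congr 1
      · simp [A]
      · refine Set.iInter₂_congr fun i hi => ?_
        have : i ≠ k := Nat.ne_of_lt (Finset.mem_range.1 hi)
        simp [A, this]
    have hprodval : ∏ i ∈ Finset.range (k+1), Pm (A i)
        = ENNReal.ofReal (μ z k) * c ^ k := by
      rw [Finset.range_add_one, Finset.prod_insert (by simp)]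
      have h1 : Pm (A k) = ENNReal.ofReal (μ z k) := by
        simp only [A, if_pos rfl]
        exact Pm_cnt_eq M hp0 hp1 hμ0 hμsum ([] : List ℕ) z k
      have h2 : ∀ i ∈ Finset.range k, Pm (A i) = c := by
        intro i hi
        have : i ≠ k := Nat.ne_of_lt (Finset.mem_range.1 hi)
        simp only [A, if_neg this]
        exact hstepne i
      rw [h1, Finset.prod_congr rfl h2, Finset.prod_const, Finset.card_range]
    rw [← hinter, hprod, hprodval]
  rw [hdec, measure_iUnion ?_ ?_]
  · calc ∑' k : ℕ, Pm ({ω | M.cnt ([] : List ℕ) z ω = k}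
          ∩ ⋂ i ∈ Finset.range k, (M.step ([i]) z) ⁻¹' {w}ᶜ)
        = ∑' k : ℕ, ENNReal.ofReal (μ z k) * c ^ k := tsum_congr hperk
      _ ≤ ∑' k : ℕ, ENNReal.ofReal (μ z k) * c := by
          refine ENNReal.tsum_le_tsum fun k => ?_
          cases k with
          | zero => simp [hμzero z]
          | succ j =>
            refine mul_le_mul_right ?_ _
            calc c ^ (j+1) = c ^ j * c := pow_succ c j
              _ ≤ 1 * c := mul_le_mul_left (pow_le_one' hc1 j) c
              _ = c := one_mul c
      _ = (∑' k : ℕ, ENNReal.ofReal (μ z k)) * c := ENNReal.tsum_mul_right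
      _ = c := by rw [tsum_ofReal_μ hp0 hp1 hμ0 hμsum z, one_mul]
  · intro a b hab
    rw [Function.onFun]
    refine Set.disjoint_left.2 ?_
    rintro ω ⟨h1, -⟩ ⟨h2, -⟩
    exact hab (h1.symm.trans h2)
  · intro k
    exact ((M.meas_cnt ([] : List ℕ) z) (measurableSet_singleton k)).inter
      (MeasurableSet.biInter (Finset.range k).countable_toSet fun i _ =>
        (M.meas_step ([i]) z) (measurableSet_singleton w).compl)

include hμzero in
lemma claimA {w : X} (base : ∀ z', Pm (M.sAV ([] : List ℕ) 0 w z') = 0) :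
    ∀ (n : ℕ) (z' : X), Pm (M.sAV ([] : List ℕ) n w z') = 0 := by
  intro n
  induction n with
  | zero => exact base
  | succ n ih =>
    intro z'
    rw [Pm_sAV_succ M hp0 hp1 hμ0 hμsum n w z']
    have hq : (∑' y : X, ENNReal.ofReal (p z' y) * Pm (M.sAV ([] : List ℕ) n w y)) = 0 := by
      refine ENNReal.tsum_eq_zero.2 fun y => ?_
      rw [ih y, mul_zero]
    rw [hq]
    refine ENNReal.tsum_eq_zero.2 fun k => ?_
    cases k with
    | zero => simp [hμzero z']
    | succ j => simp [zero_pow]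

include hμzero in
lemma transfer_step {y w : X} (hA : ∀ z', Pm (M.sAV ([] : List ℕ) 0 y z') = 0)
    (hpw : 0 < p y w) : ∀ z', Pm (M.sAV ([] : List ℕ) 0 w z') = 0 := by
  have hAn := claimA M hp0 hp1 hμ0 hμsum hμzero hA
  have hstep1 : Pm (M.sAV ([] : List ℕ) 0 w y) = 0 := by
    set A := Pm (M.sAV ([] : List ℕ) 0 w y) with hAdef
    have hkey := key_bound M hp0 hp1 hμ0 hμsum (z := y) (y := y) (w := w) (r := 1)
      (Or.inl le_rfl)
    rw [hAn 1 y, zero_add] at hkey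
    by_contra hA0
    have hAne : A ≠ 0 := hA0
    have hAtop : A ≠ ∞ := measure_ne_top Pm _
    have hclt : Pm (M.G1 y w) < 1 := by
      refine lt_of_le_of_lt (G1_bound M hp0 hp1 hμ0 hμsum hμzero y w) ?_
      exact ENNReal.sub_lt_self ENNReal.one_ne_top one_ne_zero
        (by simpa [ENNReal.ofReal_eq_zero, not_le] using hpw.not_ge)
    have : A < A := by
      calc A ≤ Pm (M.G1 y w) * A := hkey
        _ < 1 * A := by
            exact ENNReal.mul_lt_mul_left hAne hAtop hclt
        _ = A := one_mul A
    exact absurd this (lt_irrefl A)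
  intro z'
  by_cases hz : z' = y
  · rw [hz]; exact hstep1
  · have hkey := key_bound M hp0 hp1 hμ0 hμsum (z := z') (y := y) (w := w) (r := 0)
      (Or.inr hz)
    rw [hA z', hstep1, mul_zero, zero_add] at hkey
    exact le_antisymm hkey zero_le

include hμzero in
lemma path_transfer : ∀ (k : ℕ) (z w : X), 0 < kpow p k z w →
    (∀ z', Pm (M.sAV ([] : List ℕ) 0 z z') = 0) →
    (∀ z', Pm (M.sAV ([] : List ℕ) 0 w z') = 0) := by
  intro k
  induction k with
  | zero =>
    intro z w hk hz
    rw [kpow] at hk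
    split at hk
    · next h => rw [← h]; exact hz
    · exact absurd hk (lt_irrefl 0)
  | succ k ih =>
    intro z w hk hz
    rw [kpow] at hk
    have hkn : ∀ x y, 0 ≤ kpow p k x y := kpow_nonneg hp0 k
    have hex : ∃ c : X, 0 < p z c * kpow p k c w := by
      by_contra hno
      push_neg at hno
      have hz0 : ∀ c : X, p z c * kpow p k c w = 0 := fun c =>
        le_antisymm (hno c) (mul_nonneg (hp0 z c) (hkn c w))
      rw [tsum_congr hz0, tsum_zero] at hk
      exact absurd hk (lt_irrefl 0)
    obtain ⟨c, hc⟩ := hex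
    have hpc : 0 < p z c := by
      rcases lt_or_eq_of_le (hp0 z c) with h | h
      · exact h
      · rw [← h, zero_mul] at hc; exact absurd hc (lt_irrefl 0)
    have hkc : 0 < kpow p k c w := by
      rcases lt_or_eq_of_le (hkn c w) with h | h
      · exact h
      · rw [← h, mul_zero] at hc; exact absurd hc (lt_irrefl 0)
    exact ih c w hkc (transfer_step M hp0 hp1 hμ0 hμsum hμzero hz hpc)

lemma alpha_eq_one {x : X} (hAV : ∀ n : ℕ, Pm (M.sAV ([] : List ℕ) n x x) = 0) :
    M.alpha x = 1 := by
  have h1 : Pm (⋃ n : ℕ, M.sAV ([] : List ℕ) n x x) = 0 := measure_iUnion_null hAV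
  have h2 : (⋃ n : ℕ, M.sAV ([] : List ℕ) n x x)ᶜ ⊆ M.visitsInf x x := by
    intro ω hω
    rw [Set.mem_compl_iff, Set.mem_iUnion, not_exists] at hω
    show {u : List ℕ | M.alive x u ω ∧ M.pos x u ω = x}.Infinite
    by_contra hfin
    rw [Set.not_infinite] at hfin
    obtain ⟨N, hN⟩ := (hfin.image List.length).bddAbove
    have hA := hω (N+1)
    simp only [sAV, Set.mem_setOf_eq, not_forall] at hA
    obtain ⟨u, ha, hl, hp'⟩ := hA
    have hmem : u ∈ {u : List ℕ | M.alive x u ω ∧ M.pos x u ω = x} := by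
      refine ⟨(M.sAlive_nil x u ω).1 ha, ?_⟩
      have := hp'
      rw [sPos_nil] at this
      simpa using this
    have : u.length ≤ N := hN (Set.mem_image_of_mem _ hmem)
    omega
  have h3 : Pm (M.visitsInf x x) = 1 := by
    refine le_antisymm prob_le_one ?_
    calc (1 : ℝ≥0∞) = Pm ((⋃ n : ℕ, M.sAV ([] : List ℕ) n x x)ᶜ) := by
          rw [prob_compl_eq_one_sub (MeasurableSet.iUnion fun n =>
            measurableSet_sAV M ([] : List ℕ) n x x), h1, tsub_zero]
      _ ≤ Pm (M.visitsInf x x) := measure_mono h2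
  rw [alpha, h3]
  simp

end BMC
/-- Menshikov–Volkov criterion, easy direction: if the BMC is not strongly
recurrent and `g(x)` is the probability that no particle starting from `x` ever visits `o`
(with `g(o) := 0`), then `g` is positive somewhere and satisfies `Ψ(x, Pg(x)) ≥ g(x)` for
all `x ≠ o`. -/
theorem bmc_not_strongly_recurrent_superharmonic
    {X : Type*} [Countable X] [MeasurableSpace X] [MeasurableSingletonClass X]
    (p : X → X → ℝ) (μ : X → ℕ → ℝ)
    (hp0 : ∀ x y, 0 ≤ p x y) (hp1 : ∀ x, HasSum (p x) 1)
    (hirred : ∀ x y, ∃ k : ℕ, 0 < kpow p k x y)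
    (hμ0 : ∀ x k, 0 ≤ μ x k) (hμsum : ∀ x, HasSum (μ x) 1) (hμzero : ∀ x, μ x 0 = 0)
    {Ω : Type*} [MeasurableSpace Ω] (Pm : Measure Ω) [IsProbabilityMeasure Pm]
    (M : BMC X p μ Ω Pm)
    (hns : ¬ ∀ x, M.alpha x = 1)
    (o : X) (g : X → ℝ)
    (hg : ∀ x, g x = if x = o then 0
      else (Pm {ω | ∀ u : List ℕ, M.alive x u ω → M.pos x u ω ≠ o}).toReal) :
    (∃ y, 0 < g y ∧ g y ≤ 1) ∧
    (∀ x, x ≠ o →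
      g x ≤ ∑' k : ℕ, (∑' y : X, p x y * g y) ^ k * μ x k) := by
  classical
  have hset : ∀ y : X, {ω | ∀ u : List ℕ, M.alive y u ω → M.pos y u ω ≠ o}
      = M.sAV ([] : List ℕ) 0 o y := fun y => M.theoremSet_eq y o
  have hgy : ∀ y : X, g y = (Pm (M.sAV ([] : List ℕ) 0 o y)).toReal := by
    intro y
    rw [hg y]
    by_cases hy : y = o
    · rw [if_pos hy, hy, M.sAV_zero_self o]
      simp
    · rw [if_neg hy, hset y]
  have hgnonneg : ∀ y, 0 ≤ g y := fun y => by rw [hgy]; exact ENNReal.toReal_nonneg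
  have hgle1 : ∀ y, g y ≤ 1 := by
    intro y
    rw [hgy]
    calc (Pm (M.sAV ([] : List ℕ) 0 o y)).toReal ≤ (1 : ℝ≥0∞).toReal :=
          ENNReal.toReal_mono ENNReal.one_ne_top prob_le_one
      _ = 1 := by simp
  constructor
  · by_contra hno
    push_neg at hno
    have hg0 : ∀ y, g y = 0 := by
      intro y
      by_contra hy
      have hpos : 0 < g y := lt_of_le_of_ne (hgnonneg y) (Ne.symm hy)
      exact absurd (hgle1 y) (not_le.2 (hno y hpos))
    have hbase : ∀ z, Pm (M.sAV ([] : List ℕ) 0 o z) = 0 := by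
      intro z
      have h0 := hg0 z
      rw [hgy z] at h0
      rcases (ENNReal.toReal_eq_zero_iff _).1 h0 with h | h
      · exact h
      · exact absurd h (measure_ne_top Pm _)
    apply hns
    intro x
    obtain ⟨k, hk⟩ := hirred o x
    have hTGT := M.path_transfer hp0 hp1 hμ0 hμsum hμzero k o x hk hbase
    have hAVn : ∀ n : ℕ, Pm (M.sAV ([] : List ℕ) n x x) = 0 :=
      fun n => M.claimA hp0 hp1 hμ0 hμsum hμzero hTGT n x
    exact M.alpha_eq_one hp0 hp1 hμ0 hμsum hAVn
  · intro x hxo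
    have hQle : (∑' y : X, ENNReal.ofReal (p x y) * Pm (M.sAV ([] : List ℕ) 0 o y)) ≤ 1 := by
      calc (∑' y : X, ENNReal.ofReal (p x y) * Pm (M.sAV ([] : List ℕ) 0 o y))
          ≤ ∑' y : X, ENNReal.ofReal (p x y) * 1 :=
            ENNReal.tsum_le_tsum fun y => mul_le_mul_right prob_le_one _
        _ = 1 := by
            simp only [mul_one]
            exact BMC.tsum_ofReal_p hp0 hp1 hμ0 hμsum x
    have hQne : (∑' y : X, ENNReal.ofReal (p x y) * Pm (M.sAV ([] : List ℕ) 0 o y)) ≠ ∞ :=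
      ne_top_of_le_ne_top ENNReal.one_ne_top hQle
    have hmain : Pm (M.sAV ([] : List ℕ) 0 o x)
        = ∑' k : ℕ, ENNReal.ofReal (μ x k)
            * (∑' y : X, ENNReal.ofReal (p x y) * Pm (M.sAV ([] : List ℕ) 0 o y)) ^ k := by
      rw [M.sAV_zero_eq_one hxo]
      exact M.Pm_sAV_succ hp0 hp1 hμ0 hμsum 0 o x
    have hQreal : (∑' y : X, ENNReal.ofReal (p x y) * Pm (M.sAV ([] : List ℕ) 0 o y)).toReal
        = ∑' y : X, p x y * g y := by
      rw [ENNReal.tsum_toReal_eq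
        (fun y => ENNReal.mul_ne_top ENNReal.ofReal_ne_top (measure_ne_top Pm _))]
      refine tsum_congr fun y => ?_
      rw [ENNReal.toReal_mul, ENNReal.toReal_ofReal (hp0 x y), hgy y]
    have hfinal : g x = ∑' k : ℕ, (∑' y : X, p x y * g y) ^ k * μ x k := by
      rw [hgy x, hmain, ENNReal.tsum_toReal_eq (fun k =>
        ENNReal.mul_ne_top ENNReal.ofReal_ne_top (ENNReal.pow_ne_top hQne))]
      refine tsum_congr fun k => ?_
      rw [ENNReal.toReal_mul, ENNReal.toReal_pow, ENNReal.toReal_ofReal (hμ0 x k),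
        hQreal, mul_comm]
    exact le_of_eq hfinal
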